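/- arXiv:1602.03266 — 4 statements merged into one kernel-verified Lean document; each statement's English description precedes it below -/
import Mathlib

section
/- The Skorokhod distance between two continuous traces equals the Fréchet distance between their time-explicit curves: for continuous f : [a,b] → ℝ^d and g : [c,e] → ℝ^d, d_S(f,g) = d_F(C_f, C_g), where C_f(t) = (f(t), t), C_g(t) = (g(t), t), the Skorokhod distance uses a norm L on ℝ^d, and the Fréchet distance uses the norm ‖(p,t)‖ = max(‖p‖_L, |t|) on ℝ^{d+1}. -/
open Set

/-- sSup of a pointwise max is the max of the sSups (over a nonempty set, bounded). -/
lemma aux_sSup_max {s : Set ℝ} (hs : s.Nonempty) (u v : ℝ → ℝ)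
    (hu : BddAbove (u '' s)) (hv : BddAbove (v '' s)) :
    sSup ((fun t => max (u t) (v t)) '' s) = max (sSup (u '' s)) (sSup (v '' s)) := by
  have hb : BddAbove ((fun t => max (u t) (v t)) '' s) := by
    obtain ⟨Mu, hMu⟩ := hu; obtain ⟨Mv, hMv⟩ := hv
    refine ⟨max Mu Mv, ?_⟩
    rintro x ⟨t, ht, rfl⟩
    exact max_le_max (hMu ⟨t, ht, rfl⟩) (hMv ⟨t, ht, rfl⟩)
  apply le_antisymm
  · apply csSup_le (hs.image _)
    rintro x ⟨t, ht, rfl⟩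
    exact max_le_max (le_csSup hu ⟨t, ht, rfl⟩) (le_csSup hv ⟨t, ht, rfl⟩)
  · apply max_le
    · apply csSup_le (hs.image _)
      rintro x ⟨t, ht, rfl⟩
      exact le_trans (le_max_left _ _) (le_csSup hb ⟨t, ht, rfl⟩)
    · apply csSup_le (hs.image _)
      rintro x ⟨t, ht, rfl⟩
      exact le_trans (le_max_right _ _) (le_csSup hb ⟨t, ht, rfl⟩)

/-- A strictly monotone map of `[a,b]` onto `[c,e]` is continuous on `[a,b]`. -/
lemma aux_mono_cont {φ : ℝ → ℝ} {a b c e : ℝ} (hab : a < b)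
    (hm : StrictMonoOn φ (Set.Icc a b)) (him : φ '' Set.Icc a b = Set.Icc c e) :
    ContinuousOn φ (Set.Icc a b) := by
  intro x hx
  obtain ⟨hax, hxb⟩ := hx
  have hmemx : x ∈ Set.Icc a b := ⟨hax, hxb⟩
  have hφx : φ x ∈ Set.Icc c e := him ▸ Set.mem_image_of_mem φ hmemx
  have hmema : a ∈ Set.Icc a b := ⟨le_rfl, hab.le⟩
  have hmemb : b ∈ Set.Icc a b := ⟨hab.le, le_rfl⟩
  have hφa : φ a ∈ Set.Icc c e := him ▸ Set.mem_image_of_mem φ hmema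
  have hφb : φ b ∈ Set.Icc c e := him ▸ Set.mem_image_of_mem φ hmemb
  have hleft : ContinuousWithinAt φ (Set.Icc a x) x := by
    rcases eq_or_lt_of_le hax with h | h
    · rw [← h, Set.Icc_self]; exact continuousWithinAt_singleton
    · have hs : Set.Icc a b ∈ nhdsWithin x (Set.Iic x) :=
        Filter.mem_of_superset (Ioc_mem_nhdsLE h)
          (fun y hy => ⟨hy.1.le, hy.2.trans hxb⟩)
      have hbtw : ∀ y < φ x, ∃ t ∈ Set.Icc a b, φ t ∈ Set.Ico y (φ x) := by
        intro y hy
        have hφax : φ a < φ x := hm hmema hmemx h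
        have hz : max y (φ a) ∈ Set.Icc c e :=
          ⟨le_trans hφa.1 (le_max_right _ _),
            max_le (le_of_lt (lt_of_lt_of_le hy hφx.2)) hφa.2⟩
        rw [← him] at hz
        obtain ⟨t, ht, hφt⟩ := hz
        exact ⟨t, ht, hφt ▸ ⟨le_max_left _ _, max_lt hy hφax⟩⟩
      exact (hm.continuousWithinAt_left_of_exists_between hs hbtw).mono
        (fun y hy => hy.2)
  have hright : ContinuousWithinAt φ (Set.Icc x b) x := by
    rcases eq_or_lt_of_le hxb with h | h
    · rw [h, Set.Icc_self]; exact continuousWithinAt_singleton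
    · have hs : Set.Icc a b ∈ nhdsWithin x (Set.Ici x) :=
        Filter.mem_of_superset (Ico_mem_nhdsGE h)
          (fun y hy => ⟨hax.trans hy.1, hy.2.le⟩)
      have hbtw : ∀ y, y > φ x → ∃ t ∈ Set.Icc a b, φ t ∈ Set.Ioc (φ x) y := by
        intro y hy
        have hφxb : φ x < φ b := hm hmemx hmemb h
        have hz : min y (φ b) ∈ Set.Icc c e :=
          ⟨le_min (le_of_lt (lt_of_le_of_lt hφx.1 hy)) hφb.1,
            le_trans (min_le_right _ _) hφb.2⟩
        rw [← him] at hz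
        obtain ⟨t, ht, hφt⟩ := hz
        exact ⟨t, ht, hφt ▸ ⟨lt_min hy hφxb, min_le_left _ _⟩⟩
      exact (hm.continuousWithinAt_right_of_exists_between hs hbtw).mono
        (fun y hy => hy.1)
  have := hleft.union hright
  rwa [Set.Icc_union_Icc_eq_Icc hax hxb] at this

/-- A seminorm-like `L` composed with a function continuous on a compact set has
bounded-above image. -/
lemma aux_L_bdd {d : ℕ} (L : (Fin d → ℝ) → ℝ)
    (hL0 : ∀ p, L p = 0 ↔ p = 0)
    (hLsmul : ∀ (k : ℝ) p, L (k • p) = |k| * L p)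
    (hLadd : ∀ p q, L (p + q) ≤ L p + L q)
    {s : Set ℝ} (hs : IsCompact s) {F : ℝ → Fin d → ℝ} (hF : ContinuousOn F s) :
    BddAbove ((fun t => L (F t)) '' s) := by
  have hL0' : L 0 = 0 := (hL0 0).mpr rfl
  have hLneg : ∀ p, L (-p) = L p := by
    intro p
    have := hLsmul (-1) p
    simpa using this
  have hLnn : ∀ p, 0 ≤ L p := by
    intro p
    have h1 := hLadd p (-p)
    rw [add_neg_cancel, hL0', hLneg] at h1
    linarith
  set C : ℝ := ∑ i : Fin d, L (Pi.single i 1) with hC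
  have hCnn : 0 ≤ C := Finset.sum_nonneg fun i _ => hLnn _
  have hsum : ∀ (u : Finset (Fin d)) (h : Fin d → (Fin d → ℝ)),
      L (∑ i ∈ u, h i) ≤ ∑ i ∈ u, L (h i) := by
    intro u
    induction u using Finset.cons_induction with
    | empty => intro h; simp [hL0']
    | cons i u hi ih =>
        intro h
        rw [Finset.sum_cons, Finset.sum_cons]
        exact le_trans (hLadd _ _) (by gcongr; exact ih h)
  have hbound : ∀ p : Fin d → ℝ, L p ≤ C * ‖p‖ := by
    intro p
    have hrepr : p = ∑ i : Fin d, (p i) • (Pi.single i (1:ℝ) : Fin d → ℝ) := by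
      ext j
      simp [Pi.single_apply, eq_comm]
    calc L p = L (∑ i : Fin d, (p i) • (Pi.single i (1:ℝ) : Fin d → ℝ)) := by rw [← hrepr]
      _ ≤ ∑ i : Fin d, L ((p i) • (Pi.single i (1:ℝ) : Fin d → ℝ)) := hsum _ _
      _ = ∑ i : Fin d, |p i| * L (Pi.single i (1:ℝ)) := by
          simp [hLsmul]
      _ ≤ ∑ i : Fin d, ‖p‖ * L (Pi.single i (1:ℝ)) := by
          apply Finset.sum_le_sum
          intro i _
          exact mul_le_mul_of_nonneg_right
            (by simpa [Real.norm_eq_abs] using norm_le_pi_norm p i) (hLnn _)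
      _ = C * ‖p‖ := by
          rw [hC, Finset.sum_mul]
          exact Finset.sum_congr rfl fun i _ => mul_comm _ _
  obtain ⟨M, hM⟩ := (hs.image_of_continuousOn hF.norm).bddAbove
  refine ⟨C * max M 0, ?_⟩
  rintro x ⟨t, ht, rfl⟩
  calc L (F t) ≤ C * ‖F t‖ := hbound _
    _ ≤ C * max M 0 :=
        mul_le_mul_of_nonneg_left
          (le_trans (hM ⟨t, ht, rfl⟩) (le_max_left _ _)) hCnn

/-- The Skorokhod distance between two continuous traces equals the Fréchet
distance between their time-explicit curves, with the norm
`‖(p,t)‖ = max (L p) |t|` on `ℝ^(d+1)`. -/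
theorem skorokhod_eq_frechet (d : ℕ) (a b c e : ℝ) (hab : a < b) (hce : c < e)
    (L : (Fin d → ℝ) → ℝ)
    (hL0 : ∀ p, L p = 0 ↔ p = 0)
    (hLsmul : ∀ (k : ℝ) p, L (k • p) = |k| * L p)
    (hLadd : ∀ p q, L (p + q) ≤ L p + L q)
    (f g : ℝ → Fin d → ℝ)
    (hf : ContinuousOn f (Set.Icc a b)) (hg : ContinuousOn g (Set.Icc c e)) :
    sInf {v : ℝ | ∃ r : ℝ → ℝ,
        ContinuousOn r (Set.Icc a b) ∧ StrictMonoOn r (Set.Icc a b) ∧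
        r '' Set.Icc a b = Set.Icc c e ∧
        v = max (sSup ((fun t => |r t - t|) '' Set.Icc a b))
                (sSup ((fun t => L (f t - g (r t))) '' Set.Icc a b))}
      =
    sInf {v : ℝ | ∃ α1 α2 : ℝ → ℝ,
        ContinuousOn α1 (Set.Icc (0:ℝ) 1) ∧ StrictMonoOn α1 (Set.Icc (0:ℝ) 1) ∧
        α1 '' Set.Icc (0:ℝ) 1 = Set.Icc a b ∧
        ContinuousOn α2 (Set.Icc (0:ℝ) 1) ∧ StrictMonoOn α2 (Set.Icc (0:ℝ) 1) ∧
        α2 '' Set.Icc (0:ℝ) 1 = Set.Icc c e ∧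
        v = sSup ((fun θ => max (L (f (α1 θ) - g (α2 θ))) |α1 θ - α2 θ|) ''
              Set.Icc (0:ℝ) 1)} := by
  have hne01 : (Set.Icc (0:ℝ) 1).Nonempty := Set.nonempty_Icc.mpr zero_le_one
  have hneab : (Set.Icc a b).Nonempty := Set.nonempty_Icc.mpr hab.le
  congr 1
  ext v
  constructor
  · -- Skorokhod witness → Fréchet witness
    rintro ⟨r, hrc, hrm, hri, rfl⟩
    have hrmap : Set.MapsTo r (Set.Icc a b) (Set.Icc c e) := by
      rw [← hri]; exact Set.mapsTo_image r _
    set α1 : ℝ → ℝ := fun θ => a + θ * (b - a) with hα1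
    have hα1c : ContinuousOn α1 (Set.Icc 0 1) := by fun_prop
    have hα1m : StrictMonoOn α1 (Set.Icc (0:ℝ) 1) := by
      intro x _ y _ hxy
      simp only [hα1]
      nlinarith
    have hα1i : α1 '' Set.Icc (0:ℝ) 1 = Set.Icc a b := by
      ext x
      simp only [Set.mem_image, Set.mem_Icc, hα1]
      constructor
      · rintro ⟨θ, ⟨h0, h1⟩, rfl⟩
        constructor <;> nlinarith
      · rintro ⟨h1, h2⟩
        refine ⟨(x - a) / (b - a), ⟨div_nonneg (by linarith) (by linarith), ?_⟩, ?_⟩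
        · rw [div_le_one (by linarith)]; linarith
        · rw [div_mul_cancel₀ _ (by linarith : b - a ≠ (0:ℝ))]; ring
    have hα1map : Set.MapsTo α1 (Set.Icc (0:ℝ) 1) (Set.Icc a b) := by
      rw [← hα1i]; exact Set.mapsTo_image α1 _
    refine ⟨α1, fun θ => r (α1 θ), hα1c, hα1m, hα1i,
      hrc.comp hα1c hα1map,
      fun x hx y hy hxy => hrm (hα1map hx) (hα1map hy) (hα1m hx hy hxy),
      by rw [← Set.image_image r α1, hα1i, hri], ?_⟩
    have himg : ((fun θ => max (L (f (α1 θ) - g (r (α1 θ)))) |α1 θ - r (α1 θ)|) ''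
        Set.Icc (0:ℝ) 1)
        = ((fun t => max (L (f t - g (r t))) |t - r t|) '' Set.Icc a b) := by
      rw [← hα1i, Set.image_image]
    have haux := aux_sSup_max hneab (fun t => L (f t - g (r t))) (fun t => |t - r t|)
      (aux_L_bdd L hL0 hLsmul hLadd isCompact_Icc
        (F := fun t => f t - g (r t)) (hf.sub (hg.comp hrc hrmap)))
      ((isCompact_Icc.image_of_continuousOn
        ((continuousOn_id.sub hrc).abs : ContinuousOn (fun t => |t - r t|) _)).bddAbove)
    rw [himg, haux, max_comm,
      show (fun t => |r t - t|) = (fun t => |t - r t|) from funext fun t => abs_sub_comm _ _]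
  · -- Fréchet witness → Skorokhod witness
    rintro ⟨α1, α2, h1c, h1m, h1i, h2c, h2m, h2i, rfl⟩
    have h1map : Set.MapsTo α1 (Set.Icc (0:ℝ) 1) (Set.Icc a b) := by
      rw [← h1i]; exact Set.mapsTo_image α1 _
    have h2map : Set.MapsTo α2 (Set.Icc (0:ℝ) 1) (Set.Icc c e) := by
      rw [← h2i]; exact Set.mapsTo_image α2 _
    set β : ℝ → ℝ := Function.invFunOn α1 (Set.Icc 0 1) with hβ
    have hβmem : ∀ t ∈ Set.Icc a b, β t ∈ Set.Icc (0:ℝ) 1 ∧ α1 (β t) = t := by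
      intro t ht
      rw [← h1i] at ht
      obtain ⟨θ, hθ, hθt⟩ := ht
      exact Function.invFunOn_pos ⟨θ, hθ, hθt⟩
    have hβα : ∀ θ ∈ Set.Icc (0:ℝ) 1, β (α1 θ) = θ :=
      fun θ hθ => (h1m.injOn).leftInvOn_invFunOn hθ
    set r : ℝ → ℝ := fun t => α2 (β t) with hr
    have hβimg : β '' Set.Icc a b = Set.Icc (0:ℝ) 1 := by
      apply Set.Subset.antisymm
      · rintro x ⟨t, ht, rfl⟩
        exact (hβmem t ht).1
      · intro θ hθ
        exact ⟨α1 θ, h1map hθ, hβα θ hθ⟩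
    have hri : r '' Set.Icc a b = Set.Icc c e := by
      rw [show r = α2 ∘ β from rfl, Set.image_comp, hβimg, h2i]
    have hrm : StrictMonoOn r (Set.Icc a b) := by
      intro x hx y hy hxy
      obtain ⟨hxm, hxe⟩ := hβmem x hx
      obtain ⟨hym, hye⟩ := hβmem y hy
      apply h2m hxm hym
      rw [← h1m.lt_iff_lt hxm hym, hxe, hye]
      exact hxy
    have hrc : ContinuousOn r (Set.Icc a b) := aux_mono_cont hab hrm hri
    refine ⟨r, hrc, hrm, hri, ?_⟩
    have himg1 : (fun t => |r t - t|) '' Set.Icc a b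
        = (fun θ => |α1 θ - α2 θ|) '' Set.Icc (0:ℝ) 1 := by
      rw [← h1i, Set.image_image]
      apply Set.image_congr
      intro θ hθ
      simp only [hr, hβα θ hθ, abs_sub_comm]
    have himg2 : (fun t => L (f t - g (r t))) '' Set.Icc a b
        = (fun θ => L (f (α1 θ) - g (α2 θ))) '' Set.Icc (0:ℝ) 1 := by
      rw [← h1i, Set.image_image]
      apply Set.image_congr
      intro θ hθ
      simp only [hr, hβα θ hθ]
    have haux := aux_sSup_max hne01 (fun θ => L (f (α1 θ) - g (α2 θ)))
      (fun θ => |α1 θ - α2 θ|)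
      (aux_L_bdd L hL0 hLsmul hLadd isCompact_Icc
        (F := fun θ => f (α1 θ) - g (α2 θ))
        ((hf.comp h1c h1map).sub (hg.comp h2c h2map)))
      ((isCompact_Icc.image_of_continuousOn
        ((h1c.sub h2c).abs : ContinuousOn (fun θ => |α1 θ - α2 θ|) _)).bddAbove)
    rw [himg1, himg2, haux, max_comm]
end

section
/- Convexity of the Φ_min free space for a single cell: let R_a(ρ) = (1−ρ)·P_a^0 + ρ·P_a^1 and R_b(ρ) = (1−ρ)·P_b^0 + ρ·P_b^1 be linear interpolations of nonempty convex compact sets in ℝ^n. For δ ≥ 0, the set { (ρ_a, ρ_b) ∈ [0,1]² : min_{p ∈ R_a(ρ_a), q ∈ R_b(ρ_b)} ‖p − q‖ ≤ δ } is convex. -/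
open Pointwise

lemma mem_interp_comb {E : Type*} [NormedAddCommGroup E] [NormedSpace ℝ E]
    {s t : Set E} (hs : Convex ℝ s) (ht : Convex ℝ t)
    {ρ σ θ : ℝ} (hθ0 : 0 ≤ θ) (hθ1 : θ ≤ 1)
    (hρ0 : 0 ≤ ρ) (hρ1 : ρ ≤ 1) (hσ0 : 0 ≤ σ) (hσ1 : σ ≤ 1)
    {p q : E} (hp : p ∈ (1 - ρ) • s + ρ • t) (hq : q ∈ (1 - σ) • s + σ • t) :
    θ • p + (1 - θ) • q ∈
      (1 - (θ * ρ + (1 - θ) * σ)) • s + (θ * ρ + (1 - θ) * σ) • t := by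
  obtain ⟨x, hx, y, hy, rfl⟩ := hp
  obtain ⟨x', hx', y', hy', rfl⟩ := hq
  have hsEq : (θ * (1 - ρ)) • s + ((1 - θ) * (1 - σ)) • s
      = (θ * (1 - ρ) + (1 - θ) * (1 - σ)) • s :=
    (hs.add_smul (by nlinarith) (by nlinarith)).symm
  have htEq : (θ * ρ) • t + ((1 - θ) * σ) • t = (θ * ρ + (1 - θ) * σ) • t :=
    (ht.add_smul (by nlinarith) (by nlinarith)).symm
  have hxs : θ • x + (1 - θ) • x' ∈ (θ * (1 - ρ) + (1 - θ) * (1 - σ)) • s := by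
    rw [← hsEq]
    exact Set.add_mem_add (by rw [mul_smul]; exact Set.smul_mem_smul_set hx)
      (by rw [mul_smul]; exact Set.smul_mem_smul_set hx')
  have hyt : θ • y + (1 - θ) • y' ∈ (θ * ρ + (1 - θ) * σ) • t := by
    rw [← htEq]
    exact Set.add_mem_add (by rw [mul_smul]; exact Set.smul_mem_smul_set hy)
      (by rw [mul_smul]; exact Set.smul_mem_smul_set hy')
  have hc : θ * (1 - ρ) + (1 - θ) * (1 - σ) = 1 - (θ * ρ + (1 - θ) * σ) := by ring
  have : θ • (x + y) + (1 - θ) • (x' + y')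
      = (θ • x + (1 - θ) • x') + (θ • y + (1 - θ) • y') := by
    simp [smul_add]; abel
  rw [this]
  exact Set.add_mem_add (hc ▸ hxs) hyt

/-- Convexity of the `Φ_min` free space for a single cell. -/
theorem phiMin_freeSpace_convex {E : Type*} [NormedAddCommGroup E]
    [NormedSpace ℝ E] [FiniteDimensional ℝ E]
    (Pa0 Pa1 Pb0 Pb1 : Set E)
    (ha0 : Pa0.Nonempty) (ha1 : Pa1.Nonempty) (hb0 : Pb0.Nonempty) (hb1 : Pb1.Nonempty)
    (hca0 : Convex ℝ Pa0) (hca1 : Convex ℝ Pa1) (hcb0 : Convex ℝ Pb0) (hcb1 : Convex ℝ Pb1)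
    (hka0 : IsCompact Pa0) (hka1 : IsCompact Pa1) (hkb0 : IsCompact Pb0) (hkb1 : IsCompact Pb1)
    (δ : ℝ) (hδ : 0 ≤ δ) :
    Convex ℝ {ρ : ℝ × ℝ | ρ ∈ Set.Icc (0:ℝ) 1 ×ˢ Set.Icc (0:ℝ) 1 ∧
      sInf ((fun pq : E × E => ‖pq.1 - pq.2‖) ''
        (((1 - ρ.1) • Pa0 + ρ.1 • Pa1) ×ˢ ((1 - ρ.2) • Pb0 + ρ.2 • Pb1))) ≤ δ} := by
  -- notation
  set f : E × E → ℝ := fun pq => ‖pq.1 - pq.2‖ with hf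
  have hfc : Continuous f := (continuous_fst.sub continuous_snd).norm
  have hA : ∀ r : ℝ, IsCompact ((1 - r) • Pa0 + r • Pa1) :=
    fun r => (hka0.smul _).add (hka1.smul _)
  have hB : ∀ r : ℝ, IsCompact ((1 - r) • Pb0 + r • Pb1) :=
    fun r => (hkb0.smul _).add (hkb1.smul _)
  have hAne : ∀ r : ℝ, ((1 - r) • Pa0 + r • Pa1).Nonempty :=
    fun r => (ha0.smul_set).add (ha1.smul_set)
  have hBne : ∀ r : ℝ, ((1 - r) • Pb0 + r • Pb1).Nonempty :=
    fun r => (hb0.smul_set).add (hb1.smul_set)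
  -- attainment of the infimum
  have key : ∀ r : ℝ × ℝ, ∃ pq : E × E,
      pq ∈ (((1 - r.1) • Pa0 + r.1 • Pa1) ×ˢ ((1 - r.2) • Pb0 + r.2 • Pb1)) ∧
      sInf (f '' (((1 - r.1) • Pa0 + r.1 • Pa1) ×ˢ ((1 - r.2) • Pb0 + r.2 • Pb1))) = f pq := by
    intro r
    obtain ⟨pq, hpq, heq⟩ := ((hA r.1).prod (hB r.2)).exists_sInf_image_eq
      ((hAne r.1).prod (hBne r.2)) hfc.continuousOn
    exact ⟨pq, hpq, heq⟩
  rintro ρ ⟨hρI, hρd⟩ σ ⟨hσI, hσd⟩ a b ha hb hab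
  refine ⟨((convex_Icc (0:ℝ) 1).prod (convex_Icc 0 1)) hρI hσI ha hb hab, ?_⟩
  obtain ⟨⟨p, q⟩, hpq, heq1⟩ := key ρ
  obtain ⟨⟨p', q'⟩, hpq', heq2⟩ := key σ
  have hb' : b = 1 - a := by linarith
  subst hb'
  have hmemA : a • p + (1 - a) • p' ∈
      (1 - (a * ρ.1 + (1 - a) * σ.1)) • Pa0 + (a * ρ.1 + (1 - a) * σ.1) • Pa1 :=
    mem_interp_comb hca0 hca1 ha (by linarith) hρI.1.1 hρI.1.2 hσI.1.1 hσI.1.2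
      hpq.1 hpq'.1
  have hmemB : a • q + (1 - a) • q' ∈
      (1 - (a * ρ.2 + (1 - a) * σ.2)) • Pb0 + (a * ρ.2 + (1 - a) * σ.2) • Pb1 :=
    mem_interp_comb hcb0 hcb1 ha (by linarith) hρI.2.1 hρI.2.2 hσI.2.1 hσI.2.2
      hpq.2 hpq'.2
  have hbdd : BddBelow (f '' ((((1 - (a • ρ + (1 - a) • σ).1) • Pa0 + (a • ρ + (1 - a) • σ).1 • Pa1)) ×ˢ
      (((1 - (a • ρ + (1 - a) • σ).2) • Pb0 + (a • ρ + (1 - a) • σ).2 • Pb1)))) := by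
    refine ⟨0, ?_⟩
    rintro _ ⟨pq, -, rfl⟩
    exact norm_nonneg _
  have hmem : ((a • p + (1 - a) • p', a • q + (1 - a) • q') : E × E) ∈
      (((1 - (a • ρ + (1 - a) • σ).1) • Pa0 + (a • ρ + (1 - a) • σ).1 • Pa1)) ×ˢ
      (((1 - (a • ρ + (1 - a) • σ).2) • Pb0 + (a • ρ + (1 - a) • σ).2 • Pb1)) := by
    constructor
    · simpa [Prod.smul_fst, smul_eq_mul] using hmemA
    · simpa [Prod.smul_snd, smul_eq_mul] using hmemB
  refine le_trans (csInf_le hbdd (Set.mem_image_of_mem f hmem)) ?_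
  have : f (a • p + (1 - a) • p', a • q + (1 - a) • q')
      ≤ a * f (p, q) + (1 - a) * f (p', q') := by
    have : (a • p + (1 - a) • p') - (a • q + (1 - a) • q')
        = a • (p - q) + (1 - a) • (p' - q') := by
      simp [smul_sub]; abel
    calc f (a • p + (1 - a) • p', a • q + (1 - a) • q')
        = ‖a • (p - q) + (1 - a) • (p' - q')‖ := by rw [hf]; simp only; rw [this]
      _ ≤ ‖a • (p - q)‖ + ‖(1 - a) • (p' - q')‖ := norm_add_le _ _
      _ = a * ‖p - q‖ + (1 - a) * ‖p' - q'‖ := by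
          rw [norm_smul, norm_smul, Real.norm_of_nonneg ha,
            Real.norm_of_nonneg (by linarith)]
      _ = a * f (p, q) + (1 - a) * f (p', q') := rfl
  refine le_trans this ?_
  have h1 : f (p, q) ≤ δ := heq1 ▸ hρd
  have h2 : f (p', q') ≤ δ := heq2 ▸ hσd
  nlinarith
end

section
/- Convexity of the Φ_max free space for a single cell: with R_a, R_b as linear interpolations R_a(ρ) = (1−ρ)·P_a^0 + ρ·P_a^1 and R_b(ρ) = (1−ρ)·P_b^0 + ρ·P_b^1 of nonempty convex compact sets in ℝ^n, and δ ≥ 0, the set { (ρ_a, ρ_b) ∈ [0,1]² : max_{p ∈ R_a(ρ_a), q ∈ R_b(ρ_b)} ‖p − q‖ ≤ δ } is convex. -/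
open Pointwise

lemma interp_eq {E : Type*} [AddCommGroup E] [Module ℝ E] {s0 s1 : Set E}
    (h0 : Convex ℝ s0) (h1 : Convex ℝ s1) {ρ σ a b : ℝ}
    (hρ0 : 0 ≤ ρ) (hρ1 : ρ ≤ 1) (hσ0 : 0 ≤ σ) (hσ1 : σ ≤ 1)
    (ha : 0 ≤ a) (hb : 0 ≤ b) (hab : a + b = 1) :
    (1 - (a*ρ + b*σ)) • s0 + (a*ρ + b*σ) • s1
      = a • ((1-ρ)•s0 + ρ•s1) + b • ((1-σ)•s0 + σ•s1) := by
  rw [smul_add, smul_add, smul_smul, smul_smul, smul_smul, smul_smul]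
  have e0 : (1 - (a*ρ + b*σ)) = a*(1-ρ) + b*(1-σ) := by nlinarith
  rw [e0, h0.add_smul (by nlinarith) (by nlinarith),
      h1.add_smul (mul_nonneg ha hρ0) (mul_nonneg hb hσ0)]
  abel

lemma bound_of_sSup {E : Type*} [NormedAddCommGroup E] [NormedSpace ℝ E]
    {A B : Set E} (hA : IsCompact A) (hB : IsCompact B) {δ : ℝ}
    (h : sSup ((fun pq : E × E => ‖pq.1 - pq.2‖) '' (A ×ˢ B)) ≤ δ)
    {p q : E} (hp : p ∈ A) (hq : q ∈ B) : ‖p - q‖ ≤ δ := by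
  have hbdd : BddAbove ((fun pq : E × E => ‖pq.1 - pq.2‖) '' (A ×ˢ B)) :=
    ((hA.prod hB).image (by fun_prop)).bddAbove
  have hmem : ‖p - q‖ ∈ (fun pq : E × E => ‖pq.1 - pq.2‖) '' (A ×ˢ B) :=
    ⟨(p, q), ⟨hp, hq⟩, rfl⟩
  exact le_trans (le_csSup hbdd hmem) h

/-- Convexity of the `Φ_max` free space for a single cell. -/
theorem phiMax_freeSpace_convex {E : Type*} [NormedAddCommGroup E]
    [NormedSpace ℝ E] [FiniteDimensional ℝ E]
    (Pa0 Pa1 Pb0 Pb1 : Set E)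
    (ha0 : Pa0.Nonempty) (ha1 : Pa1.Nonempty) (hb0 : Pb0.Nonempty) (hb1 : Pb1.Nonempty)
    (hca0 : Convex ℝ Pa0) (hca1 : Convex ℝ Pa1) (hcb0 : Convex ℝ Pb0) (hcb1 : Convex ℝ Pb1)
    (hka0 : IsCompact Pa0) (hka1 : IsCompact Pa1) (hkb0 : IsCompact Pb0) (hkb1 : IsCompact Pb1)
    (δ : ℝ) (hδ : 0 ≤ δ) :
    Convex ℝ {ρ : ℝ × ℝ | ρ ∈ Set.Icc (0:ℝ) 1 ×ˢ Set.Icc (0:ℝ) 1 ∧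
      sSup ((fun pq : E × E => ‖pq.1 - pq.2‖) ''
        (((1 - ρ.1) • Pa0 + ρ.1 • Pa1) ×ˢ ((1 - ρ.2) • Pb0 + ρ.2 • Pb1))) ≤ δ} := by
  intro x hx y hy a b ha hb hab
  obtain ⟨⟨⟨hx10, hx11⟩, hx20, hx21⟩, hxS⟩ := hx
  obtain ⟨⟨⟨hy10, hy11⟩, hy20, hy21⟩, hyS⟩ := hy
  have hRax : IsCompact ((1 - x.1) • Pa0 + x.1 • Pa1) :=
    (hka0.smul _).add (hka1.smul _)
  have hRbx : IsCompact ((1 - x.2) • Pb0 + x.2 • Pb1) :=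
    (hkb0.smul _).add (hkb1.smul _)
  have hRay : IsCompact ((1 - y.1) • Pa0 + y.1 • Pa1) :=
    (hka0.smul _).add (hka1.smul _)
  have hRby : IsCompact ((1 - y.2) • Pb0 + y.2 • Pb1) :=
    (hkb0.smul _).add (hkb1.smul _)
  have hz1 : (a • x + b • y).1 = a * x.1 + b * y.1 := rfl
  have hz2 : (a • x + b • y).2 = a * x.2 + b * y.2 := rfl
  constructor
  · refine ⟨⟨?_, ?_⟩, ?_, ?_⟩ <;>
      first
      | (rw [hz1]; nlinarith)
      | (rw [hz2]; nlinarith)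
  · apply Real.sSup_le _ hδ
    rintro v ⟨⟨p, q⟩, ⟨hp, hq⟩, rfl⟩
    simp only at hp hq ⊢
    rw [hz1, interp_eq hca0 hca1 hx10 hx11 hy10 hy11 ha hb hab] at hp
    rw [hz2, interp_eq hcb0 hcb1 hx20 hx21 hy20 hy21 ha hb hab] at hq
    obtain ⟨u1, hu1, u2, hu2, rfl⟩ := hp
    obtain ⟨v1, hv1, v2, hv2, rfl⟩ := hq
    obtain ⟨p1, hp1, rfl⟩ := hu1
    obtain ⟨p2, hp2, rfl⟩ := hu2
    obtain ⟨q1, hq1, rfl⟩ := hv1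
    obtain ⟨q2, hq2, rfl⟩ := hv2
    have h1 : ‖p1 - q1‖ ≤ δ := bound_of_sSup hRax hRbx hxS hp1 hq1
    have h2 : ‖p2 - q2‖ ≤ δ := bound_of_sSup hRay hRby hyS hp2 hq2
    have : a • p1 + b • p2 - (a • q1 + b • q2) = a • (p1 - q1) + b • (p2 - q2) := by
      module
    rw [this]
    calc ‖a • (p1 - q1) + b • (p2 - q2)‖ ≤ ‖a • (p1 - q1)‖ + ‖b • (p2 - q2)‖ :=
          norm_add_le _ _
      _ = a * ‖p1 - q1‖ + b * ‖p2 - q2‖ := by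
          rw [norm_smul, norm_smul, Real.norm_of_nonneg ha, Real.norm_of_nonneg hb]
      _ ≤ a * δ + b * δ := by
          gcongr
      _ = δ := by nlinarith
end

section
/- Concatenated reparameterization upper bound: let R1 : {0,…,m1} and R2 : {0,…,m2} be sequences of nonempty convex compact subsets of ℝ^n with m2 ≥ m1, extended to [0,m1], [0,m2] by linear interpolation R(t) = (1−(t−k))·R(k) + (t−k)·R(k+1) for t ∈ [k,k+1]. Then dvar†(R1,R2) ≤ max( max_{0≤i≤m1} Φ_max(R1(i), R2(i)), max_{m1≤j≤m2} Φ_max(R1(m1), R2(j)) ), where Φ_max(A,B) = max_{a∈A,b∈B}‖a−b‖ and dvar† is the infimum over non-decreasing surjective reparameterization pairs of the sup over θ of Φ_max(R1(α1(θ)), R2(α2(θ))). -/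
open Pointwise

/-- Linear-interpolation extension of a finite sequence of sets to `[0, m]`. -/
noncomputable def pprInterp {E : Type*} [NormedAddCommGroup E] [NormedSpace ℝ E]
    (m : ℕ) (R : ℕ → Set E) (t : ℝ) : Set E :=
  (1 - (t - (min ⌊t⌋₊ (m - 1) : ℕ))) • R (min ⌊t⌋₊ (m - 1)) +
    (t - (min ⌊t⌋₊ (m - 1) : ℕ)) • R (min ⌊t⌋₊ (m - 1) + 1)

/-- Maximum distance between two sets. -/
noncomputable def phiMax {E : Type*} [NormedAddCommGroup E] (A B : Set E) : ℝ :=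
  sSup ((fun pq : E × E => ‖pq.1 - pq.2‖) '' (A ×ˢ B))

lemma phiMax_nonneg {E : Type*} [NormedAddCommGroup E] (A B : Set E) :
    0 ≤ phiMax A B := by
  apply Real.sSup_nonneg
  rintro x ⟨⟨a, b⟩, -, rfl⟩
  exact norm_nonneg _

lemma phiMax_le {E : Type*} [NormedAddCommGroup E] {A B : Set E} {c : ℝ}
    (hc : 0 ≤ c) (h : ∀ a ∈ A, ∀ b ∈ B, ‖a - b‖ ≤ c) : phiMax A B ≤ c := by
  apply Real.sSup_le _ hc
  rintro x ⟨⟨a, b⟩, ⟨ha, hb⟩, rfl⟩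
  exact h a ha b hb

lemma norm_sub_le_phiMax {E : Type*} [NormedAddCommGroup E] {A B : Set E}
    (hA : IsCompact A) (hB : IsCompact B) {a b : E} (ha : a ∈ A) (hb : b ∈ B) :
    ‖a - b‖ ≤ phiMax A B := by
  apply le_csSup
  · exact ((hA.prod hB).image ((continuous_fst.sub continuous_snd).norm)).bddAbove
  · exact ⟨(a, b), ⟨ha, hb⟩, rfl⟩

lemma phiMax_combo {E : Type*} [NormedAddCommGroup E] [NormedSpace ℝ E]
    {A A' B B' : Set E} (hA : IsCompact A) (hA' : IsCompact A')
    (hB : IsCompact B) (hB' : IsCompact B') {u v : ℝ}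
    (hu : 0 ≤ u) (hv : 0 ≤ v) (huv : u + v = 1) :
    phiMax (u • A + v • A') (u • B + v • B') ≤ max (phiMax A B) (phiMax A' B') := by
  apply phiMax_le (le_trans (phiMax_nonneg A B) (le_max_left _ _))
  rintro x hx y hy
  obtain ⟨xa, hxa, xa', hxa', rfl⟩ := Set.mem_add.mp hx
  obtain ⟨yb, hyb, yb', hyb', rfl⟩ := Set.mem_add.mp hy
  obtain ⟨a, ha, rfl⟩ := Set.mem_smul_set.mp hxa
  obtain ⟨a', ha', rfl⟩ := Set.mem_smul_set.mp hxa'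
  obtain ⟨b, hb, rfl⟩ := Set.mem_smul_set.mp hyb
  obtain ⟨b', hb', rfl⟩ := Set.mem_smul_set.mp hyb'
  have hrw : u • a + v • a' - (u • b + v • b') = u • (a - b) + v • (a' - b') := by
    simp only [smul_sub]; abel
  rw [hrw]
  calc ‖u • (a - b) + v • (a' - b')‖ ≤ ‖u • (a - b)‖ + ‖v • (a' - b')‖ := norm_add_le _ _
    _ = u * ‖a - b‖ + v * ‖a' - b'‖ := by
        rw [norm_smul, norm_smul, Real.norm_of_nonneg hu, Real.norm_of_nonneg hv]
    _ ≤ u * max (phiMax A B) (phiMax A' B') + v * max (phiMax A B) (phiMax A' B') := by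
        gcongr
        · exact (norm_sub_le_phiMax hA hB ha hb).trans (le_max_left _ _)
        · exact (norm_sub_le_phiMax hA' hB' ha' hb').trans (le_max_right _ _)
    _ = max (phiMax A B) (phiMax A' B') := by rw [← add_mul, huv, one_mul]

lemma phiMax_combo_right {E : Type*} [NormedAddCommGroup E] [NormedSpace ℝ E]
    {A B B' : Set E} (hA : IsCompact A)
    (hB : IsCompact B) (hB' : IsCompact B') {u v : ℝ}
    (hu : 0 ≤ u) (hv : 0 ≤ v) (huv : u + v = 1) :
    phiMax A (u • B + v • B') ≤ max (phiMax A B) (phiMax A B') := by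
  apply phiMax_le (le_trans (phiMax_nonneg A B) (le_max_left _ _))
  rintro a ha y hy
  obtain ⟨yb, hyb, yb', hyb', rfl⟩ := Set.mem_add.mp hy
  obtain ⟨b, hb, rfl⟩ := Set.mem_smul_set.mp hyb
  obtain ⟨b', hb', rfl⟩ := Set.mem_smul_set.mp hyb'
  have hrw : a - (u • b + v • b') = u • (a - b) + v • (a - b') := by
    have : a = (u + v) • a := by rw [huv, one_smul]
    rw [smul_sub, smul_sub]
    nth_rewrite 1 [this]
    rw [add_smul]; abel
  rw [hrw]
  calc ‖u • (a - b) + v • (a - b')‖ ≤ ‖u • (a - b)‖ + ‖v • (a - b')‖ := norm_add_le _ _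
    _ = u * ‖a - b‖ + v * ‖a - b'‖ := by
        rw [norm_smul, norm_smul, Real.norm_of_nonneg hu, Real.norm_of_nonneg hv]
    _ ≤ u * max (phiMax A B) (phiMax A B') + v * max (phiMax A B) (phiMax A B') := by
        gcongr
        · exact (norm_sub_le_phiMax hA hB ha hb).trans (le_max_left _ _)
        · exact (norm_sub_le_phiMax hA hB' ha hb').trans (le_max_right _ _)
    _ = max (phiMax A B) (phiMax A B') := by rw [← add_mul, huv, one_mul]

/-- At integer points, the interpolation equals the original set. -/
lemma pprInterp_natCast {E : Type*} [NormedAddCommGroup E] [NormedSpace ℝ E]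
    {m : ℕ} (hm : 1 ≤ m) (R : ℕ → Set E) (hR : ∀ i ≤ m, (R i).Nonempty)
    {j : ℕ} (hj : j ≤ m) : pprInterp m R (j : ℝ) = R j := by
  unfold pprInterp
  rw [Nat.floor_natCast]
  rcases lt_or_ge j m with hjm | hjm
  · have hmin : min j (m - 1) = j := min_eq_left (by omega)
    rw [hmin]
    have h1 : ((j : ℝ) - (j : ℕ)) = 0 := by simp
    rw [h1, sub_zero, one_smul, Set.zero_smul_set (hR (j + 1) (by omega)), add_zero]
  · have hjm' : j = m := le_antisymm hj hjm
    subst hjm'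
    have hmin : min j (j - 1) = j - 1 := min_eq_right (by omega)
    rw [hmin]
    have hc : ((j - 1 : ℕ) : ℝ) = (j : ℝ) - 1 := by
      push_cast [Nat.cast_sub hm]; ring
    have h1 : (1 : ℝ) - ((j : ℝ) - ((j - 1 : ℕ) : ℝ)) = 0 := by rw [hc]; ring
    have h2 : ((j : ℝ) - ((j - 1 : ℕ) : ℝ)) = 1 := by rw [hc]; ring
    have h3 : j - 1 + 1 = j := by omega
    rw [h1, h2, h3, one_smul, Set.zero_smul_set (hR (j - 1) (by omega)), zero_add]

set_option maxHeartbeats 2000000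

/-- Concatenated reparameterization upper bound: `dvar†(R1, R2)` is bounded by
the maximum of the diagonal comparisons `Φ_max (R1 i) (R2 i)` for `i ≤ m1` and
the tail comparisons `Φ_max (R1 m1) (R2 j)` for `m1 ≤ j ≤ m2`. -/
theorem dvar_dagger_concat_bound {E : Type*} [NormedAddCommGroup E]
    [NormedSpace ℝ E] [FiniteDimensional ℝ E]
    (m1 m2 : ℕ) (hm1 : 1 ≤ m1) (hm12 : m1 ≤ m2)
    (R1 R2 : ℕ → Set E)
    (hR1 : ∀ i ≤ m1, (R1 i).Nonempty ∧ Convex ℝ (R1 i) ∧ IsCompact (R1 i))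
    (hR2 : ∀ j ≤ m2, (R2 j).Nonempty ∧ Convex ℝ (R2 j) ∧ IsCompact (R2 j)) :
    sInf {v : ℝ | ∃ α1 α2 : ℝ → ℝ,
        ContinuousOn α1 (Set.Icc (0:ℝ) 1) ∧ MonotoneOn α1 (Set.Icc (0:ℝ) 1) ∧
        α1 '' Set.Icc (0:ℝ) 1 = Set.Icc 0 (m1:ℝ) ∧ α1 0 = 0 ∧ α1 1 = m1 ∧
        ContinuousOn α2 (Set.Icc (0:ℝ) 1) ∧ MonotoneOn α2 (Set.Icc (0:ℝ) 1) ∧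
        α2 '' Set.Icc (0:ℝ) 1 = Set.Icc 0 (m2:ℝ) ∧ α2 0 = 0 ∧ α2 1 = m2 ∧
        v = sSup ((fun θ =>
              phiMax (pprInterp m1 R1 (α1 θ)) (pprInterp m2 R2 (α2 θ))) ''
            Set.Icc (0:ℝ) 1)}
      ≤
    max ((Finset.range (m1 + 1)).sup' (by simp) (fun i => phiMax (R1 i) (R2 i)))
        ((Finset.Icc m1 m2).sup' (by simp [hm12]) (fun j => phiMax (R1 m1) (R2 j))) := by
  have hm2 : 1 ≤ m2 := le_trans hm1 hm12
  set M1 : ℝ := (Finset.range (m1 + 1)).sup' (by simp) (fun i => phiMax (R1 i) (R2 i)) with hM1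
  set M2 : ℝ := (Finset.Icc m1 m2).sup' (by simp [hm12]) (fun j => phiMax (R1 m1) (R2 j)) with hM2
  set M : ℝ := max M1 M2 with hM
  have hMnn : 0 ≤ M := le_trans (phiMax_nonneg (R1 0) (R2 0))
    (le_trans (Finset.le_sup' (fun i => phiMax (R1 i) (R2 i))
      (by simp : (0:ℕ) ∈ Finset.range (m1+1))) (le_max_left _ _))
  -- the reparameterizations
  set A1 : ℝ → ℝ := fun θ => min (2 * (m1:ℝ) * θ) m1 with hA1
  set A2 : ℝ → ℝ := fun θ =>
    min (2 * (m1:ℝ) * θ) m1 + max (2 * ((m2:ℝ) - m1) * (θ - 1/2)) 0 with hA2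
  have hm1R : (0:ℝ) ≤ m1 := by positivity
  have hm12R : (m1:ℝ) ≤ m2 := by exact_mod_cast hm12
  have cont1 : Continuous A1 := (continuous_const.mul continuous_id).min continuous_const
  have cont2 : Continuous A2 := by
    exact ((continuous_const.mul continuous_id).min continuous_const).add
      ((continuous_const.mul (continuous_id.sub continuous_const)).max continuous_const)
  have mono1 : Monotone A1 := fun a b hab =>
    min_le_min (mul_le_mul_of_nonneg_left hab (by positivity)) le_rfl
  have mono2 : Monotone A2 := by
    apply Monotone.add mono1
    intro a b hab
    exact max_le_max (by nlinarith) le_rfl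
  have hA10 : A1 0 = 0 := by simp [hA1, hm1R]
  have hA11 : A1 1 = m1 := by
    simp only [hA1, mul_one]
    exact min_eq_right (by linarith)
  have hA20 : A2 0 = 0 := by
    simp only [hA2]
    have h1 : min (2 * (m1:ℝ) * 0) m1 = 0 := by simp [hm1R]
    have h2 : max (2 * ((m2:ℝ) - m1) * (0 - 1/2)) 0 = 0 := by
      apply max_eq_right; nlinarith
    rw [h1, h2, add_zero]
  have hA21 : A2 1 = m2 := by
    simp only [hA2]
    have h1 : min (2 * (m1:ℝ) * 1) m1 = m1 := min_eq_right (by linarith)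
    have h2 : max (2 * ((m2:ℝ) - m1) * (1 - 1/2)) 0 = (m2:ℝ) - m1 := by
      rw [max_eq_left (by nlinarith)]; ring
    rw [h1, h2]; ring
  have himg1 : A1 '' Set.Icc 0 1 = Set.Icc 0 (m1:ℝ) := by
    apply Set.Subset.antisymm
    · rintro x ⟨θ, hθ, rfl⟩
      exact ⟨hA10 ▸ mono1 hθ.1, hA11 ▸ mono1 hθ.2⟩
    · have h := intermediate_value_Icc zero_le_one cont1.continuousOn
      rwa [hA10, hA11] at h
  have himg2 : A2 '' Set.Icc 0 1 = Set.Icc 0 (m2:ℝ) := by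
    apply Set.Subset.antisymm
    · rintro x ⟨θ, hθ, rfl⟩
      exact ⟨hA20 ▸ mono2 hθ.1, hA21 ▸ mono2 hθ.2⟩
    · have h := intermediate_value_Icc zero_le_one cont2.continuousOn
      rwa [hA20, hA21] at h
  -- diagonal bound
  have helperA : ∀ t ∈ Set.Icc (0:ℝ) m1,
      phiMax (pprInterp m1 R1 t) (pprInterp m2 R2 t) ≤ M1 := by
    rintro t ⟨ht0, htm⟩
    rcases eq_or_lt_of_le htm with heq | hlt
    · subst heq
      rw [pprInterp_natCast hm1 R1 (fun i hi => (hR1 i hi).1) le_rfl,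
        pprInterp_natCast hm2 R2 (fun j hj => (hR2 j hj).1) hm12]
      exact Finset.le_sup' (fun i => phiMax (R1 i) (R2 i)) (by simp : m1 ∈ Finset.range (m1+1))
    · set k := ⌊t⌋₊ with hk
      have hkm1 : k < m1 := by
        have := (Nat.floor_lt ht0).mpr (by exact_mod_cast hlt)
        exact_mod_cast this
      have hkm2 : k < m2 := lt_of_lt_of_le hkm1 hm12
      have hmin1 : min k (m1 - 1) = k := min_eq_left (by omega)
      have hmin2 : min k (m2 - 1) = k := min_eq_left (by omega)
      have hs0 : 0 ≤ t - (k:ℝ) := sub_nonneg.mpr (Nat.floor_le ht0)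
      have hs1 : 0 ≤ 1 - (t - (k:ℝ)) := by
        have := Nat.lt_floor_add_one t
        have : t < (k:ℝ) + 1 := by exact_mod_cast this
        linarith
      have hsum : (1 - (t - (k:ℝ))) + (t - (k:ℝ)) = 1 := by ring
      unfold pprInterp
      rw [← hk, hmin1, hmin2]
      calc phiMax ((1 - (t - (k:ℝ))) • R1 k + (t - (k:ℝ)) • R1 (k+1))
            ((1 - (t - (k:ℝ))) • R2 k + (t - (k:ℝ)) • R2 (k+1))
          ≤ max (phiMax (R1 k) (R2 k)) (phiMax (R1 (k+1)) (R2 (k+1))) :=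
            phiMax_combo (hR1 k (by omega)).2.2 (hR1 (k+1) (by omega)).2.2
              (hR2 k (by omega)).2.2 (hR2 (k+1) (by omega)).2.2 hs1 hs0 hsum
        _ ≤ M1 := max_le
            (Finset.le_sup' (fun i => phiMax (R1 i) (R2 i)) (by simp; omega : k ∈ Finset.range (m1+1)))
            (Finset.le_sup' (fun i => phiMax (R1 i) (R2 i)) (by simp; omega : k+1 ∈ Finset.range (m1+1)))
  -- tail bound
  have helperB : ∀ u ∈ Set.Icc (m1:ℝ) m2,
      phiMax (R1 m1) (pprInterp m2 R2 u) ≤ M2 := by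
    rintro u ⟨hu0, hum⟩
    rcases eq_or_lt_of_le hum with heq | hlt
    · subst heq
      rw [pprInterp_natCast hm2 R2 (fun j hj => (hR2 j hj).1) le_rfl]
      exact Finset.le_sup' (fun j => phiMax (R1 m1) (R2 j)) (by simp [hm12] : m2 ∈ Finset.Icc m1 m2)
    · have hu0' : (0:ℝ) ≤ u := le_trans hm1R hu0
      set k := ⌊u⌋₊ with hk
      have hkm1 : m1 ≤ k := Nat.le_floor hu0
      have hkm2 : k < m2 := by
        have := (Nat.floor_lt hu0').mpr (by exact_mod_cast hlt)
        exact_mod_cast this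
      have hmin2 : min k (m2 - 1) = k := min_eq_left (by omega)
      have hs0 : 0 ≤ u - (k:ℝ) := sub_nonneg.mpr (Nat.floor_le hu0')
      have hs1 : 0 ≤ 1 - (u - (k:ℝ)) := by
        have h := Nat.lt_floor_add_one u
        have : u < (k:ℝ) + 1 := by exact_mod_cast h
        linarith
      have hsum : (1 - (u - (k:ℝ))) + (u - (k:ℝ)) = 1 := by ring
      unfold pprInterp
      rw [← hk, hmin2]
      calc phiMax (R1 m1) ((1 - (u - (k:ℝ))) • R2 k + (u - (k:ℝ)) • R2 (k+1))
          ≤ max (phiMax (R1 m1) (R2 k)) (phiMax (R1 m1) (R2 (k+1))) :=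
            phiMax_combo_right (hR1 m1 le_rfl).2.2
              (hR2 k (by omega)).2.2 (hR2 (k+1) (by omega)).2.2 hs1 hs0 hsum
        _ ≤ M2 := max_le
            (Finset.le_sup' (fun j => phiMax (R1 m1) (R2 j)) (by simp [Finset.mem_Icc]; omega : k ∈ Finset.Icc m1 m2))
            (Finset.le_sup' (fun j => phiMax (R1 m1) (R2 j)) (by simp [Finset.mem_Icc]; omega : k+1 ∈ Finset.Icc m1 m2))
  -- key pointwise bound
  have key : ∀ θ ∈ Set.Icc (0:ℝ) 1,
      phiMax (pprInterp m1 R1 (A1 θ)) (pprInterp m2 R2 (A2 θ)) ≤ M := by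
    rintro θ ⟨hθ0, hθ1⟩
    rcases le_or_gt θ (1/2) with hhalf | hhalf
    · have hA1eq : A1 θ = 2 * (m1:ℝ) * θ := min_eq_left (by nlinarith)
      have hA2eq : A2 θ = 2 * (m1:ℝ) * θ := by
        simp only [hA2]
        rw [min_eq_left (by nlinarith), max_eq_right (by nlinarith), add_zero]
      rw [hA1eq, hA2eq]
      refine le_trans (helperA _ ⟨by positivity, by nlinarith⟩) (le_max_left _ _)
    · have hA1eq : A1 θ = m1 := min_eq_right (by nlinarith)
      have hA2eq : A2 θ = (m1:ℝ) + 2 * ((m2:ℝ) - m1) * (θ - 1/2) := by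
        simp only [hA2]
        rw [min_eq_right (by nlinarith), max_eq_left (by nlinarith)]
      rw [hA1eq, hA2eq,
        pprInterp_natCast hm1 R1 (fun i hi => (hR1 i hi).1) le_rfl]
      refine le_trans (helperB _ ⟨by nlinarith, by nlinarith⟩) (le_max_right _ _)
  -- conclude
  have hvle : sSup ((fun θ =>
        phiMax (pprInterp m1 R1 (A1 θ)) (pprInterp m2 R2 (A2 θ))) ''
      Set.Icc (0:ℝ) 1) ≤ M := by
    apply Real.sSup_le _ hMnn
    rintro x ⟨θ, hθ, rfl⟩
    exact key θ hθ
  refine le_trans (csInf_le ⟨0, ?_⟩ ?_) hvle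
  · rintro v ⟨α1, α2, -, -, -, -, -, -, -, -, -, -, rfl⟩
    apply Real.sSup_nonneg
    rintro x ⟨θ, -, rfl⟩
    exact phiMax_nonneg _ _
  · exact ⟨A1, A2, cont1.continuousOn, mono1.monotoneOn _, himg1, hA10, hA11,
      cont2.continuousOn, mono2.monotoneOn _, himg2, hA20, hA21, rfl⟩
end
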